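/- Let C be a nonempty set of tree substitutions that is a chain with respect to the pointwise order, and let σ' be the pointwise union, σ' x := ⋃_{σ ∈ C} σ x (which is again a tree substitution). Then for every input tree s (a finite ranked tree over Σ ⊕ X), σ'_io(s) = ⋃_{σ ∈ C} σ_io(s). -/

import Mathlib

/-- Arity function for pattern trees: `Sum.inl a` has rank `rkA a`, holes have rank 0. -/
def patArity {A : Type*} (rkA : A → ℕ) (h : ℕ) : A ⊕ Fin h → Type :=
  fun d => Fin (Sum.elim rkA (fun _ => 0) d)

/-- Arity function for input trees: `Sum.inl a` has rank `rkA a`, `Sum.inr x` has rank `rkX x`. -/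
def inArity {A X : Type*} (rkA : A → ℕ) (rkX : X → ℕ) : A ⊕ X → Type :=
  fun d => Fin (Sum.elim rkA rkX d)

/-- `plug t g` replaces every leaf of `t` labeled by the hole `i` with `g i`. -/
def plug {A : Type*} {rkA : A → ℕ} {h : ℕ} :
    WType (patArity rkA h) → (Fin h → WType (patArity rkA h)) → WType (patArity rkA h)
  | WType.mk (Sum.inl a) c, g => WType.mk (Sum.inl a) (fun j => plug (c j) g)
  | WType.mk (Sum.inr i) _, g => g i

/-- The set of holes occurring in a pattern tree. -/
def holes {A : Type*} {rkA : A → ℕ} {h : ℕ} : WType (patArity rkA h) → Set (Fin h)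
  | WType.mk (Sum.inl _) c => ⋃ j, holes (c j)
  | WType.mk (Sum.inr i) _ => {i}

/-- `σ` is a tree substitution: each tree of `σ x` only uses holes `i` with `i < rkX x`. -/
def IsTreeSubst {A X : Type*} (rkA : A → ℕ) (rkX : X → ℕ) (h : ℕ)
    (σ : X → Set (WType (patArity rkA h))) : Prop :=
  ∀ x : X, ∀ t ∈ σ x, ∀ i ∈ holes t, (i : ℕ) < rkX x

/-- The inside-out extension of a tree substitution to input trees. -/
def subIO {A X : Type*} (rkA : A → ℕ) (rkX : X → ℕ) (h : ℕ)
    (σ : X → Set (WType (patArity rkA h))) :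
    WType (inArity rkA rkX) → Set (WType (patArity rkA h))
  | WType.mk (Sum.inl a) c =>
      {t | ∃ c' : Fin (rkA a) → WType (patArity rkA h),
        (∀ j : Fin (rkA a), c' j ∈ subIO rkA rkX h σ (c j)) ∧
        t = WType.mk (Sum.inl a) (fun j => c' j)}
  | WType.mk (Sum.inr x) c =>
      {t' | ∃ t ∈ σ x, ∃ g : Fin h → WType (patArity rkA h),
        (∀ (i : Fin h) (hi : (i : ℕ) < rkX x), g i ∈ subIO rkA rkX h σ (c ⟨(i : ℕ), hi⟩)) ∧
        t' = plug t g}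

/-- `plugRel S t t'` holds iff `t'` is obtained from `t` by replacing each leaf labeled by
hole `i`, independently of all other leaves, by some element of `S i`. -/
def plugRel {A : Type*} {rkA : A → ℕ} {h : ℕ} (S : Fin h → Set (WType (patArity rkA h))) :
    WType (patArity rkA h) → WType (patArity rkA h) → Prop
  | WType.mk (Sum.inl a) c, t' =>
      ∃ c' : Fin (rkA a) → WType (patArity rkA h),
        (∀ j : Fin (rkA a), plugRel S (c j) (c' j)) ∧
        t' = WType.mk (Sum.inl a) (fun j => c' j)
  | WType.mk (Sum.inr i) _, t' => t' ∈ S i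

/-- The outside-in extension of a tree substitution to input trees. -/
def subOI {A X : Type*} (rkA : A → ℕ) (rkX : X → ℕ) (h : ℕ)
    (σ : X → Set (WType (patArity rkA h))) :
    WType (inArity rkA rkX) → Set (WType (patArity rkA h))
  | WType.mk (Sum.inl a) c =>
      {t | ∃ c' : Fin (rkA a) → WType (patArity rkA h),
        (∀ j : Fin (rkA a), c' j ∈ subOI rkA rkX h σ (c j)) ∧
        t = WType.mk (Sum.inl a) (fun j => c' j)}
  | WType.mk (Sum.inr x) c =>
      {t' | ∃ t ∈ σ x, plugRel
        (fun i : Fin h =>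
          if hi : (i : ℕ) < rkX x then subOI rkA rkX h σ (c ⟨(i : ℕ), hi⟩) else ∅) t t'}


lemma subIO_mono {A X : Type*} (rkA : A → ℕ) (rkX : X → ℕ) (h : ℕ)
    {σ τ : X → Set (WType (patArity rkA h))} (hστ : ∀ x, σ x ⊆ τ x) :
    ∀ s, subIO rkA rkX h σ s ⊆ subIO rkA rkX h τ s := by
  intro s
  induction s with
  | mk d c ih =>
    cases d with
    | inl a =>
      intro t ht
      rw [subIO] at ht ⊢
      obtain ⟨c', hc', rfl⟩ := ht
      exact ⟨c', fun j => ih j (hc' j), rfl⟩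
    | inr x =>
      intro t' ht'
      rw [subIO] at ht' ⊢
      obtain ⟨t, htσ, g, hg, rfl⟩ := ht'
      exact ⟨t, hστ x htσ, g, fun i hi => ih _ (hg i hi), rfl⟩

theorem io_of_chain_union {A X : Type*} (rkA : A → ℕ) (rkX : X → ℕ) (h : ℕ)
    (hA : ∀ a, rkA a ≤ h) (hX : ∀ x, rkX x ≤ h)
    (C : Set (X → Set (WType (patArity rkA h)))) (hne : C.Nonempty)
    (hchain : IsChain (· ≤ ·) C) (hC : ∀ σ ∈ C, IsTreeSubst rkA rkX h σ)
    (σ' : X → Set (WType (patArity rkA h))) (hσ' : ∀ x : X, σ' x = ⋃ σ ∈ C, σ x) :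
    IsTreeSubst rkA rkX h σ' ∧
    ∀ s : WType (inArity rkA rkX),
      subIO rkA rkX h σ' s = ⋃ σ ∈ C, subIO rkA rkX h σ s := by
  constructor
  · intro x t ht i hi
    rw [hσ'] at ht
    simp only [Set.mem_iUnion] at ht
    obtain ⟨σ, hσC, htσ⟩ := ht
    exact hC σ hσC x t htσ i hi
  have hdir : DirectedOn (· ≤ ·) C := hchain.directedOn
  haveI : Nonempty ↥C := hne.to_subtype
  haveI : IsDirected ↥C (· ≤ ·) :=
    ⟨fun a b => by
      obtain ⟨m, hm, h1, h2⟩ := hdir a a.2 b b.2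
      exact ⟨⟨m, hm⟩, h1, h2⟩⟩
  have key : ∀ {ι : Type} [Finite ι] (f : ι → X → Set (WType (patArity rkA h))),
      (∀ i, f i ∈ C) → ∃ σ ∈ C, ∀ i, f i ≤ σ := by
    intro ι _ f hf
    obtain ⟨m, hm⟩ := Finite.exists_le (fun i => (⟨f i, hf i⟩ : ↥C))
    exact ⟨m, m.2, fun i => hm i⟩
  have hle : ∀ σ ∈ C, ∀ x, σ x ⊆ σ' x := by
    intro σ hσC x
    intro t ht
    rw [hσ']
    simp only [Set.mem_iUnion]
    exact ⟨σ, hσC, ht⟩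
  intro s
  apply Set.Subset.antisymm
  · induction s with
    | mk d c ih =>
      cases d with
      | inl a =>
        intro t ht
        rw [subIO] at ht
        obtain ⟨c', hc', rfl⟩ := ht
        have h1 : ∀ j, ∃ σ ∈ C, c' j ∈ subIO rkA rkX h σ (c j) := by
          intro j
          have := ih j (hc' j)
          simpa only [Set.mem_iUnion, exists_prop] using this
        choose F hF1 hF2 using h1
        obtain ⟨σ, hσC, hσb⟩ := key (ι := Fin (rkA a)) F hF1
        have : WType.mk (Sum.inl a) (fun j => c' j) ∈
            subIO rkA rkX h σ (WType.mk (Sum.inl a) c) := by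
          rw [subIO]
          exact ⟨c', fun j => subIO_mono rkA rkX h (hσb j) _ (hF2 j), rfl⟩
        simp only [Set.mem_iUnion]
        exact ⟨σ, hσC, this⟩
      | inr x =>
        intro t' ht'
        rw [subIO] at ht'
        obtain ⟨t, htσ, g, hg, rfl⟩ := ht'
        rw [hσ'] at htσ
        simp only [Set.mem_iUnion] at htσ
        obtain ⟨σ₀, hσ₀C, htσ₀⟩ := htσ
        have h1 : ∀ j : Fin (rkX x), ∃ σ ∈ C,
            g ⟨j.1, lt_of_lt_of_le j.2 (hX x)⟩ ∈ subIO rkA rkX h σ (c j) := by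
          intro j
          have hmem := hg ⟨j.1, lt_of_lt_of_le j.2 (hX x)⟩ j.2
          have hcj : (⟨j.1, j.2⟩ : Fin (rkX x)) = j := rfl
          change g _ ∈ subIO rkA rkX h σ' (c j) at hmem
          have := ih j hmem
          simpa only [Set.mem_iUnion, exists_prop] using this
        choose F hF1 hF2 using h1
        obtain ⟨σ, hσC, hσb⟩ := key (fun o : Option (Fin (rkX x)) => o.elim σ₀ F)
          (fun o => by cases o with
            | none => exact hσ₀C
            | some j => exact hF1 j)
        have hσ₀le : σ₀ ≤ σ := hσb none
        have hFle : ∀ j, F j ≤ σ := fun j => hσb (some j)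
        have : plug t g ∈ subIO rkA rkX h σ (WType.mk (Sum.inr x) c) := by
          rw [subIO]
          refine ⟨t, hσ₀le x htσ₀, g, ?_, rfl⟩
          intro i hi
          have := subIO_mono rkA rkX h (hFle ⟨(i : ℕ), hi⟩) _ (hF2 ⟨(i : ℕ), hi⟩)
          exact this
        simp only [Set.mem_iUnion]
        exact ⟨σ, hσC, this⟩
  · intro t ht
    simp only [Set.mem_iUnion] at ht
    obtain ⟨σ, hσC, htσ⟩ := ht
    exact subIO_mono rkA rkX h (hle σ hσC) s htσ
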